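/- The cubic Hamiltonian graph G_12 on 12 vertices, obtained from the 12-cycle v_1...v_12 by adding edges v_12 v_5, v_1 v_10, v_11 v_9, v_2 v_8, v_3 v_7, v_4 v_6, is asymmetric. -/
import Mathlib

/-- The cubic Hamiltonian graph `G₁₂` on 12 vertices (vertex `v_i` is the element of
`Fin 12` with value `i - 1`): the 12-cycle `v_1 ⋯ v_12 v_1` together with the chords
`v_12 v_5`, `v_1 v_10`, `v_11 v_9`, `v_2 v_8`, `v_3 v_7`, `v_4 v_6`. -/
def G12 : SimpleGraph (Fin 12) :=
  SimpleGraph.fromRel (fun a b =>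
    (b.val = a.val + 1) ∨ (a = 11 ∧ b = 0) ∨
    (a = 11 ∧ b = 4) ∨ (a = 0 ∧ b = 9) ∨ (a = 10 ∧ b = 8) ∨
    (a = 1 ∧ b = 7) ∨ (a = 2 ∧ b = 6) ∨ (a = 3 ∧ b = 5))

instance : DecidableRel G12.Adj := fun a b =>
  decidable_of_iff' _ (SimpleGraph.fromRel_adj _ a b)

/-- Neighbourhood of `v` in `G12` as a finset. -/
def nbr (v : Fin 12) : Finset (Fin 12) := Finset.univ.filter (fun w => G12.Adj v w)

/-- One round of colour refinement: encodes the old colour of `v` together with the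
multiset of old colours of its neighbours (colours are assumed `< 12`, neighbour
counts `≤ 3 < 4`, so `12 * ∑ 4^colour + colour` is a faithful encoding). -/
def step (c : Fin 12 → ℕ) (v : Fin 12) : ℕ :=
  12 * (∑ w ∈ nbr v, 4 ^ (c w)) + c v

/-- (Twice the) number of triangles through `v`. -/
def tri (v : Fin 12) : ℕ :=
  ∑ w ∈ nbr v, ∑ u ∈ nbr v, (if G12.Adj w u then 1 else 0)

lemma nbr_map (φ : G12 ≃g G12) (v : Fin 12) : nbr (φ v) = (nbr v).image φ := by
  ext w
  simp only [nbr, Finset.mem_image, Finset.mem_filter, Finset.mem_univ, true_and]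
  constructor
  · intro h
    refine ⟨φ.symm w, ?_, by simp⟩
    have : G12.Adj (φ v) (φ (φ.symm w)) := by simpa using h
    exact φ.map_adj_iff.mp this
  · rintro ⟨u, hu, rfl⟩
    exact φ.map_adj_iff.mpr hu

lemma tri_inv (φ : G12 ≃g G12) (v : Fin 12) : tri (φ v) = tri v := by
  unfold tri
  rw [nbr_map φ v, Finset.sum_image (fun a _ b _ h => φ.injective h)]
  refine Finset.sum_congr rfl (fun w _ => ?_)
  rw [Finset.sum_image (fun a _ b _ h => φ.injective h)]
  refine Finset.sum_congr rfl (fun u _ => ?_)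
  simp [φ.map_adj_iff]

lemma step_inv (φ : G12 ≃g G12) (c : Fin 12 → ℕ) (hc : ∀ x, c (φ x) = c x)
    (v : Fin 12) : step c (φ v) = step c v := by
  unfold step
  rw [nbr_map φ v, Finset.sum_image (fun a _ b _ h => φ.injective h), hc v]
  congr 2
  exact Finset.sum_congr rfl (fun w _ => by rw [hc w])

def e1 : Fin 12 → ℕ := ![1, 0, 1, 3, 3, 3, 1, 1, 3, 3, 3, 2]
def e2 : Fin 12 → ℕ := ![3, 0, 1, 5, 6, 5, 2, 1, 5, 5, 6, 4]
def e3 : Fin 12 → ℕ := ![3, 0, 2, 5, 4, 6, 1, 2, 5, 7, 4, 8]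
def e4 : Fin 12 → ℕ := ![9, 0, 2, 6, 8, 3, 5, 2, 7, 4, 10, 1]
def e5 : Fin 12 → ℕ := ![1, 8, 3, 6, 2, 7, 0, 5, 9, 10, 4, 11]

/-- The cubic Hamiltonian graph `G₁₂` on 12 vertices is asymmetric. -/
theorem G12_asymmetric : ∀ φ : G12 ≃g G12, ∀ v, φ v = v := by
  intro φ v
  have h1 : ∀ x y : Fin 12, step tri x = step tri y → e1 x = e1 y := by decide
  have h2 : ∀ x y : Fin 12, step e1 x = step e1 y → e2 x = e2 y := by decide
  have h3 : ∀ x y : Fin 12, step e2 x = step e2 y → e3 x = e3 y := by decide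
  have h4 : ∀ x y : Fin 12, step e3 x = step e3 y → e4 x = e4 y := by decide
  have h5 : ∀ x y : Fin 12, step e4 x = step e4 y → e5 x = e5 y := by decide
  have h6 : ∀ x y : Fin 12, e5 x = e5 y → x = y := by decide
  have p1 : ∀ x, e1 (φ x) = e1 x := fun x => h1 _ _ (step_inv φ tri (tri_inv φ) x)
  have p2 : ∀ x, e2 (φ x) = e2 x := fun x => h2 _ _ (step_inv φ e1 p1 x)
  have p3 : ∀ x, e3 (φ x) = e3 x := fun x => h3 _ _ (step_inv φ e2 p2 x)
  have p4 : ∀ x, e4 (φ x) = e4 x := fun x => h4 _ _ (step_inv φ e3 p3 x)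
  have p5 : ∀ x, e5 (φ x) = e5 x := fun x => h5 _ _ (step_inv φ e4 p4 x)
  exact h6 _ _ (p5 v)
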